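/- Define a betweenness relation on the five vertices {A,B,C,D,E} of a regular pentagon (identified with the set Fin 5, vertices at positions k·2π/5 on a circle) by: for three distinct vertices X, Y, Z, (XYZ) holds iff Y is the apex of the isosceles triangle XYZ, i.e. the distances satisfy |XY| = |YZ| ≠ |XZ|. Then every triangle formed by three distinct vertices of a regular pentagon is isosceles but not equilateral, so this relation is well-defined: for any three distinct vertices exactly one of them is the apex. -/

import Mathlib

open Real

/-- Vertices of the regular pentagon on the unit circle in the Euclidean plane. -/
noncomputable def pentagonVertex (k : Fin 5) : EuclideanSpace ℝ (Fin 2) :=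
  WithLp.toLp 2 ![Real.cos (2 * π * (k.val : ℝ) / 5), Real.sin (2 * π * (k.val : ℝ) / 5)]

/-- `y` is the apex of the isosceles triangle `x y z`:
its distances to the other two vertices are equal, and the triangle is not equilateral. -/
noncomputable def IsApex (x y z : Fin 5) : Prop :=
  dist (pentagonVertex x) (pentagonVertex y) = dist (pentagonVertex y) (pentagonVertex z) ∧
  dist (pentagonVertex x) (pentagonVertex y) ≠ dist (pentagonVertex x) (pentagonVertex z)

lemma pentagon_dist_sq (a b : Fin 5) :
    dist (pentagonVertex a) (pentagonVertex b) ^ 2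
      = 2 - 2 * Real.cos (2 * π * (((b - a : Fin 5)).val : ℝ) / 5) := by
  obtain ⟨t, ht⟩ : ∃ t : ℤ, (((b - a : Fin 5)).val : ℤ) = (b.val : ℤ) - (a.val : ℤ) + 5 * t := by
    refine ⟨(((((b - a : Fin 5)).val : ℤ)) - b.val + a.val) / 5, ?_⟩
    have h : (b - a).val = (5 - a.val + b.val) % 5 := by
      simp [Fin.sub_def]
    have ha := a.is_lt
    have hb := b.is_lt
    omega
  have hr : (((b - a : Fin 5)).val : ℝ) = (b.val : ℝ) - (a.val : ℝ) + 5 * (t : ℝ) := by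
    exact_mod_cast ht
  have hcos : Real.cos (2 * π * (((b - a : Fin 5)).val : ℝ) / 5)
      = Real.cos (2 * π * (b.val : ℝ) / 5 - 2 * π * (a.val : ℝ) / 5) := by
    rw [hr, show 2 * π * ((b.val : ℝ) - (a.val : ℝ) + 5 * (t : ℝ)) / 5
        = (2 * π * (b.val : ℝ) / 5 - 2 * π * (a.val : ℝ) / 5) + (t : ℝ) * (2 * π) by ring,
      Real.cos_add_int_mul_two_pi]
  rw [hcos, EuclideanSpace.dist_eq, Real.sq_sqrt (by positivity)]
  simp only [pentagonVertex, PiLp.toLp_apply, Fin.sum_univ_two, Matrix.cons_val_zero, Matrix.cons_val_one,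
    Matrix.head_cons, Real.dist_eq, sq_abs]
  rw [Real.cos_sub]
  linear_combination Real.sin_sq_add_cos_sq (2 * π * (a.val : ℝ) / 5)
    + Real.sin_sq_add_cos_sq (2 * π * (b.val : ℝ) / 5)

lemma pentagon_cos_inj (m n : Fin 5) :
    Real.cos (2 * π * (m.val : ℝ) / 5) = Real.cos (2 * π * (n.val : ℝ) / 5)
      ↔ (m = n ∨ m = -n) := by
  have hpi := Real.pi_pos
  have e3 : Real.cos (2 * π * (3 : ℝ) / 5) = Real.cos (2 * π * (2 : ℝ) / 5) := by
    rw [show 2 * π * (3 : ℝ) / 5 = 2 * π - 2 * π * (2 : ℝ) / 5 by ring, Real.cos_two_pi_sub]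
  have e4 : Real.cos (2 * π * (4 : ℝ) / 5) = Real.cos (2 * π / 5) := by
    rw [show 2 * π * (4 : ℝ) / 5 = 2 * π - 2 * π / 5 by ring, Real.cos_two_pi_sub]
  have h01 : Real.cos (2 * π / 5) < 1 := by
    have := Real.cos_lt_cos_of_nonneg_of_le_pi (x := 0) (y := 2 * π / 5)
      le_rfl (by nlinarith) (by nlinarith)
    simpa using this
  have h02 : Real.cos (2 * π * 2 / 5) < 1 := by
    have := Real.cos_lt_cos_of_nonneg_of_le_pi (x := 0) (y := 2 * π * 2 / 5)
      le_rfl (by nlinarith) (by nlinarith)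
    simpa using this
  have h12 : Real.cos (2 * π * 2 / 5) < Real.cos (2 * π / 5) :=
    Real.cos_lt_cos_of_nonneg_of_le_pi (by positivity) (by nlinarith) (by nlinarith)
  fin_cases m <;> fin_cases n <;> constructor <;> intro h <;>
    first
      | decide
      | (exact absurd h (by decide))
      | (norm_num [e3, e4] at h ⊢ <;> linarith)
      | (exfalso; norm_num [e3, e4] at h; linarith)
      | norm_num [e3, e4]

lemma pentagon_dist_iff (a b c d : Fin 5) :
    dist (pentagonVertex a) (pentagonVertex b) = dist (pentagonVertex c) (pentagonVertex d)
      ↔ (b - a = d - c ∨ b - a = -(d - c)) := by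
  rw [show (dist (pentagonVertex a) (pentagonVertex b) = dist (pentagonVertex c) (pentagonVertex d))
      ↔ (dist (pentagonVertex a) (pentagonVertex b) ^ 2
          = dist (pentagonVertex c) (pentagonVertex d) ^ 2) from
    ⟨fun h => by rw [h], fun h => by
      nlinarith [dist_nonneg (x := pentagonVertex a) (y := pentagonVertex b),
        dist_nonneg (x := pentagonVertex c) (y := pentagonVertex d)]⟩,
    pentagon_dist_sq, pentagon_dist_sq]
  rw [show (2 - 2 * Real.cos (2 * π * (((b - a : Fin 5)).val : ℝ) / 5)
      = 2 - 2 * Real.cos (2 * π * (((d - c : Fin 5)).val : ℝ) / 5))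
      ↔ (Real.cos (2 * π * (((b - a : Fin 5)).val : ℝ) / 5)
          = Real.cos (2 * π * (((d - c : Fin 5)).val : ℝ) / 5)) from
    ⟨fun h => by linarith, fun h => by linarith⟩]
  exact pentagon_cos_inj _ _

/-- Every triangle formed by three distinct vertices of a regular pentagon is isosceles but
not equilateral, and for any three distinct vertices exactly one of them is the apex;
hence the betweenness relation `(XYZ) ↔ Y is the apex` is well-defined. -/
theorem pentagon_isosceles_not_equilateral_unique_apex :
    ∀ x y z : Fin 5, x ≠ y → y ≠ z → x ≠ z →
      (¬ (dist (pentagonVertex x) (pentagonVertex y) = dist (pentagonVertex y) (pentagonVertex z) ∧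
          dist (pentagonVertex y) (pentagonVertex z) = dist (pentagonVertex x) (pentagonVertex z))) ∧
      ((IsApex x y z ∧ ¬ IsApex y x z ∧ ¬ IsApex x z y) ∨
       (¬ IsApex x y z ∧ IsApex y x z ∧ ¬ IsApex x z y) ∨
       (¬ IsApex x y z ∧ ¬ IsApex y x z ∧ IsApex x z y)) := by
  simp only [IsApex, ne_eq, pentagon_dist_iff]
  decide
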